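/- Let x and y be two independent standard normal random vectors in ℝⁿ and α ∈ (0,1]. Then ℙ[α⟨x,x⟩ ≤ ⟨x,y⟩] ≤ (1+α²)^{−n/2}. -/

import Mathlib

open MeasureTheory ProbabilityTheory Real
open scoped RealInnerProductSpace ENNReal NNReal

/-- The standard Gaussian measure on ℝⁿ. -/
noncomputable def stdGaussian (n : ℕ) : Measure (EuclideanSpace ℝ (Fin n)) :=
  volume.withDensity fun x => ENNReal.ofReal ((2 * Real.pi) ^ (-(n:ℝ)/2) * Real.exp (-‖x‖^2/2))

lemma my_integrable_rexp {n : ℕ} {b : ℝ} (hb : 0 < b) (c : ℝ)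
    (w : EuclideanSpace ℝ (Fin n)) :
    Integrable (fun v : EuclideanSpace ℝ (Fin n) => rexp (-b * ‖v‖^2 + c * ⟪w, v⟫)) := by
  have h := (GaussianFourier.integrable_cexp_neg_mul_sq_norm_add
    (V := EuclideanSpace ℝ (Fin n)) (b := (b:ℂ)) (by simpa using hb) (c:ℂ) w).norm
  convert h using 2 with v
  rw [Complex.norm_exp]
  congr 1
  simp [Complex.add_re, Complex.mul_re, ← Complex.ofReal_pow]

lemma my_integral_rexp {n : ℕ} {b : ℝ} (hb : 0 < b) (c : ℝ)
    (w : EuclideanSpace ℝ (Fin n)) :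
    ∫ v : EuclideanSpace ℝ (Fin n), rexp (-b * ‖v‖^2 + c * ⟪w, v⟫)
      = (π / b) ^ ((n:ℝ)/2) * rexp (c^2 * ‖w‖^2 / (4*b)) := by
  have h := GaussianFourier.integral_cexp_neg_mul_sq_norm_add
    (V := EuclideanSpace ℝ (Fin n)) (b := (b:ℂ)) (by simpa using hb) (c:ℂ) w
  rw [finrank_euclideanSpace_fin] at h
  rw [← Complex.ofReal_inj]
  have L : ((∫ v : EuclideanSpace ℝ (Fin n), rexp (-b * ‖v‖^2 + c * ⟪w, v⟫) : ℝ) : ℂ)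
      = ∫ v : EuclideanSpace ℝ (Fin n), Complex.exp (-(b:ℂ) * ‖v‖^2 + (c:ℂ) * ⟪w, v⟫) := by
    rw [show ((∫ v : EuclideanSpace ℝ (Fin n), rexp (-b * ‖v‖^2 + c * ⟪w, v⟫) : ℝ) : ℂ)
        = RCLike.ofReal (K := ℂ) (∫ v : EuclideanSpace ℝ (Fin n), rexp (-b * ‖v‖^2 + c * ⟪w, v⟫))
        from rfl, ← integral_ofReal]
    congr 1 with v
    norm_num [Complex.ofReal_exp]
  rw [L, h]
  rw [Complex.ofReal_mul, Complex.ofReal_cpow (by positivity : (0:ℝ) ≤ π/b)]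
  push_cast
  ring_nf

lemma my_lintegral_rexp {n : ℕ} {b : ℝ} (hb : 0 < b) (c : ℝ)
    (w : EuclideanSpace ℝ (Fin n)) :
    ∫⁻ v : EuclideanSpace ℝ (Fin n), ENNReal.ofReal (rexp (-b * ‖v‖^2 + c * ⟪w, v⟫))
      = ENNReal.ofReal ((π / b) ^ ((n:ℝ)/2) * rexp (c^2 * ‖w‖^2 / (4*b))) := by
  rw [← my_integral_rexp hb c w,
    ← ofReal_integral_eq_lintegral_ofReal (my_integrable_rexp hb c w)
      (Filter.Eventually.of_forall fun v => (Real.exp_pos _).le)]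

theorem stmt_8 (n : ℕ) (α : ℝ) (hα0 : 0 < α) (hα1 : α ≤ 1) :
    ((stdGaussian n).prod (stdGaussian n)) {p | α * ⟪p.1, p.1⟫ ≤ ⟪p.1, p.2⟫} ≤
      ENNReal.ofReal ((1+α^2) ^ (-(n:ℝ)/2)) := by
  set E := EuclideanSpace ℝ (Fin n)
  set μ := stdGaussian n with hμ
  have hρm : Measurable fun x : E =>
      ENNReal.ofReal ((2 * π) ^ (-(n:ℝ)/2) * rexp (-‖x‖^2/2)) := by
    apply ENNReal.measurable_ofReal.comp
    exact (continuous_const.mul (Real.continuous_exp.comp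
      ((continuous_norm.pow 2).neg.div_const 2))).measurable
  have hS : MeasurableSet {p : E × E | α * ⟪p.1, p.1⟫ ≤ ⟪p.1, p.2⟫} := by
    apply measurableSet_le
    · exact (continuous_const.mul (continuous_fst.inner continuous_fst)).measurable
    · exact (continuous_fst.inner continuous_snd).measurable
  have hcont : Continuous fun p : E × E =>
      ENNReal.ofReal (rexp (α * ⟪p.1, p.2⟫ - α^2 * ‖p.1‖^2)) := by
    apply ENNReal.continuous_ofReal.comp
    exact Real.continuous_exp.comp (((continuous_const.mul
      (continuous_fst.inner continuous_snd)).sub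
      (continuous_const.mul ((continuous_norm.comp continuous_fst).pow 2))))
  -- inner integral
  have inner_eq : ∀ x : E,
      ∫⁻ y, ENNReal.ofReal (rexp (α * ⟪x, y⟫ - α^2 * ‖x‖^2)) ∂μ
        = ENNReal.ofReal (rexp (-(α^2/2) * ‖x‖^2)) := by
    intro x
    have hgm : Measurable fun y : E =>
        ENNReal.ofReal (rexp (α * ⟪x, y⟫ - α^2 * ‖x‖^2)) := by
      apply ENNReal.measurable_ofReal.comp
      exact (Real.continuous_exp.comp ((continuous_const.mul
        ((continuous_const : Continuous fun _ : E => x).inner continuous_id)).sub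
        continuous_const)).measurable
    rw [hμ]
    unfold _root_.stdGaussian
    rw [lintegral_withDensity_eq_lintegral_mul _ hρm hgm]
    have key : ∀ y : E,
        (ENNReal.ofReal ((2 * π) ^ (-(n:ℝ)/2) * rexp (-‖y‖^2/2)))
          * ENNReal.ofReal (rexp (α * ⟪x, y⟫ - α^2 * ‖x‖^2))
        = ENNReal.ofReal ((2 * π) ^ (-(n:ℝ)/2) * rexp (-α^2 * ‖x‖^2))
          * ENNReal.ofReal (rexp (-(1/2) * ‖y‖^2 + α * ⟪x, y⟫)) := by
      intro y
      rw [← ENNReal.ofReal_mul (by positivity), ← ENNReal.ofReal_mul (by positivity)]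
      congr 1
      rw [mul_assoc, mul_assoc, ← Real.exp_add, ← Real.exp_add]
      congr 2
      ring
    simp only [Pi.mul_apply]
    simp_rw [key]
    rw [lintegral_const_mul' _ _ ENNReal.ofReal_ne_top,
      my_lintegral_rexp (by norm_num : (0:ℝ) < 1/2) α x,
      ← ENNReal.ofReal_mul (by positivity)]
    congr 1
    have h2π : π / (1/2 : ℝ) = 2 * π := by ring
    rw [h2π]
    have hC : (2*π) ^ (-(n:ℝ)/2) * (2*π) ^ ((n:ℝ)/2) = 1 := by
      rw [← Real.rpow_add (by positivity), show -(n:ℝ)/2 + (n:ℝ)/2 = 0 by ring,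
        Real.rpow_zero]
    have : (2*π) ^ (-(n:ℝ)/2) * rexp (-α^2 * ‖x‖^2)
          * ((2*π) ^ ((n:ℝ)/2) * rexp (α^2 * ‖x‖^2 / (4 * (1/2))))
        = ((2*π) ^ (-(n:ℝ)/2) * (2*π) ^ ((n:ℝ)/2))
          * (rexp (-α^2 * ‖x‖^2) * rexp (α^2 * ‖x‖^2 / (4 * (1/2)))) := by ring
    rw [this, hC, one_mul, ← Real.exp_add]
    congr 1
    ring
  -- outer integral
  have outer_eq : ∫⁻ x, ENNReal.ofReal (rexp (-(α^2/2) * ‖x‖^2)) ∂μ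
      = ENNReal.ofReal ((1+α^2) ^ (-(n:ℝ)/2)) := by
    have hgm : Measurable fun x : E => ENNReal.ofReal (rexp (-(α^2/2) * ‖x‖^2)) := by
      apply ENNReal.measurable_ofReal.comp
      exact (Real.continuous_exp.comp
        (continuous_const.mul (continuous_norm.pow 2))).measurable
    rw [hμ]
    unfold _root_.stdGaussian
    rw [lintegral_withDensity_eq_lintegral_mul _ hρm hgm]
    have hb : (0:ℝ) < (1+α^2)/2 := by positivity
    have key : ∀ x : E,
        (ENNReal.ofReal ((2 * π) ^ (-(n:ℝ)/2) * rexp (-‖x‖^2/2)))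
          * ENNReal.ofReal (rexp (-(α^2/2) * ‖x‖^2))
        = ENNReal.ofReal ((2 * π) ^ (-(n:ℝ)/2))
          * ENNReal.ofReal (rexp (-((1+α^2)/2) * ‖x‖^2 + 0 * ⟪(0:E), x⟫)) := by
      intro x
      rw [← ENNReal.ofReal_mul (by positivity), ← ENNReal.ofReal_mul (by positivity)]
      congr 1
      rw [mul_assoc, ← Real.exp_add]
      congr 2
      rw [inner_zero_left]
      ring
    simp only [Pi.mul_apply]
    simp_rw [key]
    rw [lintegral_const_mul' _ _ ENNReal.ofReal_ne_top,
      my_lintegral_rexp hb 0 (0:E),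
      ← ENNReal.ofReal_mul (by positivity)]
    congr 1
    rw [show (0:ℝ)^2 * ‖(0:E)‖^2 / (4*((1+α^2)/2)) = 0 by simp, Real.exp_zero, mul_one]
    rw [div_div_eq_mul_div, Real.div_rpow (by positivity) (by positivity), mul_comm π 2]
    have hA : (0:ℝ) < 1 + α^2 := by positivity
    calc (2*π)^(-(n:ℝ)/2) * ((2*π)^((n:ℝ)/2) / (1+α^2)^((n:ℝ)/2))
        = ((2*π)^(-(n:ℝ)/2) * (2*π)^((n:ℝ)/2)) / (1+α^2)^((n:ℝ)/2) := by ring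
      _ = 1 / (1+α^2)^((n:ℝ)/2) := by
          rw [← Real.rpow_add (by positivity), show -(n:ℝ)/2 + (n:ℝ)/2 = 0 by ring,
            Real.rpow_zero]
      _ = (1+α^2)^(-((n:ℝ)/2)) := by rw [one_div, ← Real.rpow_neg hA.le]
      _ = (1+α^2)^(-(n:ℝ)/2) := by ring_nf
  haveI : SFinite μ := by
    have h : SFinite (_root_.stdGaussian n) := by unfold _root_.stdGaussian; infer_instance
    rw [hμ]; exact h
  -- main chain
  calc (μ.prod μ) {p : E × E | α * ⟪p.1, p.1⟫ ≤ ⟪p.1, p.2⟫}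
      = ∫⁻ p, {p : E × E | α * ⟪p.1, p.1⟫ ≤ ⟪p.1, p.2⟫}.indicator (fun _ => 1) p ∂(μ.prod μ) :=
        (lintegral_indicator_one hS).symm
    _ ≤ ∫⁻ p, ENNReal.ofReal (rexp (α * ⟪p.1, p.2⟫ - α^2 * ‖p.1‖^2)) ∂(μ.prod μ) := by
        apply lintegral_mono
        intro p
        by_cases hp : p ∈ {p : E × E | α * ⟪p.1, p.1⟫ ≤ ⟪p.1, p.2⟫}
        · rw [Set.indicator_of_mem hp]
          rw [show (1:ℝ≥0∞) = ENNReal.ofReal 1 by simp]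
          apply ENNReal.ofReal_le_ofReal
          rw [← Real.exp_zero]
          apply Real.exp_le_exp.2
          have hp' : α * ⟪p.1, p.1⟫ ≤ ⟪p.1, p.2⟫ := hp
          rw [real_inner_self_eq_norm_sq] at hp'
          nlinarith [hp', sq_nonneg ‖p.1‖, hα0.le]
        · rw [Set.indicator_of_notMem hp]
          exact zero_le
    _ = ∫⁻ x, ∫⁻ y, ENNReal.ofReal (rexp (α * ⟪x, y⟫ - α^2 * ‖x‖^2)) ∂μ ∂μ :=
        lintegral_prod _ hcont.measurable.aemeasurable
    _ = ∫⁻ x, ENNReal.ofReal (rexp (-(α^2/2) * ‖x‖^2)) ∂μ := by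
        simp_rw [inner_eq]
    _ = ENNReal.ofReal ((1+α^2) ^ (-(n:ℝ)/2)) := outer_eq
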